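/- Consider the coverage-reduction house allocation instance constructed from a Minimum Coverage instance (E, S_1, ..., S_d, q, ℓ). If there exists an assignment φ of this instance in which at least |E| + d − q agents are envy-free, then there exists a set I ⊆ [d] with |I| = ℓ and |⋃_{t ∈ I} S_t| ≤ q. -/

import Mathlib

open Classical

/-- Utility function of the coverage-reduction instance built from a
Minimum Coverage instance with element set `α` and subsets `S 1, …, S d`:
agents are `α ⊕ Fin d` (`Sum.inl e` is the element agent `a_e`, `Sum.inr t` is
the dummy agent `a*_t`), houses are `Fin d ⊕ Fin m` (`Sum.inl t` is `h*_t`,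
`Sum.inr t` is the dummy house `h_t`, where `m = |E| + d - ℓ`). -/
def covUtil {α : Type*} [DecidableEq α] (d m : ℕ) (S : Fin d → Finset α) :
    α ⊕ Fin d → Fin d ⊕ Fin m → ℕ
  | Sum.inl e, Sum.inl t => if e ∈ S t then 1 else 0
  | Sum.inl _, Sum.inr _ => 0
  | Sum.inr t, Sum.inl t' => if t = t' then 1 else 0
  | Sum.inr _, Sum.inr _ => 0

/-- If the coverage-reduction instance has an assignment with at least
`|E| + d - q` envy-free agents, then the Minimum Coverage instance has a
solution `I ⊆ [d]` with `|I| = ℓ` and `|⋃_{t ∈ I} S_t| ≤ q`. -/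
theorem envyFree_to_coverage {α : Type*} [Fintype α] [DecidableEq α]
    (d q ℓ : ℕ) (S : Fin d → Finset α)
    (hq0 : 0 < q) (hqE : q ≤ Fintype.card α) (hℓ0 : 0 < ℓ) (hℓd : ℓ ≤ d)
    (φ : α ⊕ Fin d → Fin d ⊕ Fin (Fintype.card α + d - ℓ))
    (hφ : Function.Injective φ)
    (hEF : Fintype.card α + d - q ≤
      (Finset.univ.filter fun a : α ⊕ Fin d =>
        ∀ a' : α ⊕ Fin d,
          covUtil d (Fintype.card α + d - ℓ) S a (φ a') ≤
            covUtil d (Fintype.card α + d - ℓ) S a (φ a)).card) :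
    ∃ I : Finset (Fin d), I.card = ℓ ∧ (I.biUnion S).card ≤ q := by
  classical
  have hd0 : 0 < d := lt_of_lt_of_le hℓ0 hℓd
  have hm0 : 0 < Fintype.card α + d - ℓ := by omega
  set EF : Finset (α ⊕ Fin d) := Finset.univ.filter fun a =>
    ∀ a' : α ⊕ Fin d,
      covUtil d (Fintype.card α + d - ℓ) S a (φ a') ≤
        covUtil d (Fintype.card α + d - ℓ) S a (φ a) with hEFdef
  set K : Finset (Fin d) := Finset.univ.filter (fun t => ∃ a, φ a = Sum.inl t) with hKdef
  set U : Finset α := K.biUnion S with hUdef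
  have hcardAgents : Fintype.card (α ⊕ Fin d) = Fintype.card α + d := by simp
  -- the extraction map
  set f : (α ⊕ Fin d) → Fin d := fun a => (φ a).elim id (fun _ => ⟨0, hd0⟩) with hfdef
  have hf : ∀ a t, φ a = Sum.inl t → f a = t := by
    intro a t h; simp [hfdef, h]
  -- Step 1: ℓ ≤ |K|
  set A1 : Finset (α ⊕ Fin d) := Finset.univ.filter (fun a => ∃ t, φ a = Sum.inl t) with hA1
  have hA1K : A1.card ≤ K.card := by
    apply Finset.card_le_card_of_injOn f
    · intro a ha
      simp only [hA1, Finset.mem_filter] at ha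
      obtain ⟨t, ht⟩ : ∃ t, φ a = Sum.inl t := by simpa [hA1] using ha
      rw [hKdef, Finset.mem_coe, Finset.mem_filter]
      exact ⟨Finset.mem_univ _, a, by rw [ht, hf a t ht]⟩
    · intro a ha b hb hab
      simp only [Finset.mem_coe, hA1, Finset.mem_filter] at ha hb
      obtain ⟨-, t, ht⟩ := ha
      obtain ⟨-, t', ht'⟩ := hb
      apply hφ
      rw [ht, ht', ← hf a t ht, ← hf b t' ht', hab]
  have hA1c : (Finset.univ.filter (fun a : α ⊕ Fin d => ¬ ∃ t, φ a = Sum.inl t)).card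
      ≤ Fintype.card α + d - ℓ := by
    have h : (Finset.univ.filter (fun a : α ⊕ Fin d => ¬ ∃ t, φ a = Sum.inl t)).card
        ≤ (Finset.univ : Finset (Fin (Fintype.card α + d - ℓ))).card := by
      apply Finset.card_le_card_of_injOn
        (fun a : α ⊕ Fin d => (φ a).elim (fun _ => (⟨0, hm0⟩ : Fin (Fintype.card α + d - ℓ))) id)
      · intro a _; exact Finset.mem_univ _
      · intro a ha b hb hab
        simp only [Finset.mem_coe, Finset.mem_filter] at ha hb
        have ha' : ∃ s, φ a = Sum.inr s := by
          cases h : φ a with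
          | inl t => exact absurd ⟨t, h⟩ ha.2
          | inr s => exact ⟨s, rfl⟩
        have hb' : ∃ s, φ b = Sum.inr s := by
          cases h : φ b with
          | inl t => exact absurd ⟨t, h⟩ hb.2
          | inr s => exact ⟨s, rfl⟩
        obtain ⟨s, hs⟩ := ha'
        obtain ⟨s', hs'⟩ := hb'
        apply hφ
        simp only [hs, hs'] at hab ⊢
        simpa using hab
    simpa using h
  have hsplit : A1.card
      + (Finset.univ.filter (fun a : α ⊕ Fin d => ¬ ∃ t, φ a = Sum.inl t)).card
      = Fintype.card α + d := by
    rw [hA1, Finset.card_filter_add_card_filter_not, Finset.card_univ, hcardAgents]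
  have hKge : ℓ ≤ K.card := by omega
  -- Step 2: |U| ≤ q
  set W : Finset (α ⊕ Fin d) := U.disjSum K with hW
  have key : ∀ a ∈ W.filter (· ∈ EF), ∃ t, t ∈ K ∧ φ a = Sum.inl t := by
    intro a ha
    rw [Finset.mem_filter] at ha
    obtain ⟨haW, haEF⟩ := ha
    rw [hEFdef, Finset.mem_filter] at haEF
    have hEFa := haEF.2
    rw [hW, Finset.mem_disjSum] at haW
    rcases haW with ⟨e, he, rfl⟩ | ⟨t, ht, rfl⟩
    · rw [hUdef, Finset.mem_biUnion] at he
      obtain ⟨t, htK, heS⟩ := he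
      have htK' := htK
      rw [hKdef, Finset.mem_filter] at htK'
      obtain ⟨a', ha'⟩ := htK'.2
      have h1 := hEFa a'
      rw [ha'] at h1
      simp only [covUtil, heS, if_true] at h1
      cases h : φ (Sum.inl e) with
      | inr s => rw [h] at h1; simp [covUtil] at h1
      | inl t' =>
        rw [h] at h1
        simp only [covUtil] at h1
        by_cases heS' : e ∈ S t'
        · refine ⟨t', ?_, rfl⟩
          rw [hKdef, Finset.mem_filter]
          exact ⟨Finset.mem_univ _, Sum.inl e, h⟩
        · simp [heS'] at h1
    · have htK' := ht
      rw [hKdef, Finset.mem_filter] at htK'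
      obtain ⟨a', ha'⟩ := htK'.2
      have h1 := hEFa a'
      rw [ha'] at h1
      simp only [covUtil, if_pos rfl] at h1
      cases h : φ (Sum.inr t) with
      | inr s => rw [h] at h1; simp [covUtil] at h1
      | inl t' =>
        rw [h] at h1
        simp only [covUtil] at h1
        by_cases htt : t = t'
        · exact ⟨t', htt ▸ ht, rfl⟩
        · simp [htt] at h1
  have hWEF : (W.filter (· ∈ EF)).card ≤ K.card := by
    apply Finset.card_le_card_of_injOn f
    · intro a ha
      obtain ⟨t, htK, hφa⟩ := key a ha
      rw [hf a t hφa]; exact htK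
    · intro a ha b hb hab
      rw [Finset.mem_coe] at ha hb
      obtain ⟨t, -, hta⟩ := key a ha
      obtain ⟨t', -, htb⟩ := key b hb
      apply hφ
      rw [hta, htb, ← hf a t hta, ← hf b t' htb, hab]
  have hWcard : W.card = U.card + K.card := by rw [hW, Finset.card_disjSum]
  have hWsplit : (W.filter (· ∈ EF)).card + (W.filter (· ∉ EF)).card = W.card :=
    Finset.card_filter_add_card_filter_not (fun a => a ∈ EF)
  have hnonEF : (W.filter (· ∉ EF)).card ≤ (Finset.univ.filter (· ∉ EF)).card :=
    Finset.card_le_card (Finset.filter_subset_filter _ (Finset.subset_univ W))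
  have hnonEF2 : (Finset.univ.filter (· ∉ EF)).card + EF.card = Fintype.card α + d := by
    have heq : (Finset.univ.filter (· ∈ EF)).card = EF.card := by
      congr 1; ext a; simp
    have h2 := Finset.card_filter_add_card_filter_not
      (s := (Finset.univ : Finset (α ⊕ Fin d))) (p := fun a => a ∈ EF)
    rw [heq, Finset.card_univ, hcardAgents] at h2
    omega
  have hEFle : EF.card ≤ Fintype.card α + d := by
    calc EF.card ≤ Finset.univ.card := Finset.card_le_card (Finset.subset_univ _)
    _ = Fintype.card α + d := by rw [Finset.card_univ, hcardAgents]
  have hU : U.card ≤ q := by omega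
  -- conclude
  obtain ⟨I, hIK, hIcard⟩ := Finset.exists_subset_card_eq hKge
  refine ⟨I, hIcard, ?_⟩
  calc (I.biUnion S).card ≤ U.card :=
        Finset.card_le_card (Finset.biUnion_subset_biUnion_of_subset_left S hIK)
    _ ≤ q := hU
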